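/- Let G be a simple graph on a finite nonempty vertex set that is bipartite (2-colorable), and suppose G supports a unitary matrix: there is a unitary complex matrix U indexed by the vertices with U i j ≠ 0 if and only if G.Adj i j. Then G has a perfect matching: there exists a subgraph M of G that is a matching covering every vertex (SimpleGraph.IsPerfectMatching). -/

import Mathlib

/-- Proposition: a bipartite graph that supports a unitary matrix has a perfect
matching. -/
theorem stmt_19 (V : Type*) [Fintype V] [Nonempty V] [DecidableEq V]
    (G : SimpleGraph V) (hbip : G.Colorable 2)
    (hsupp : ∃ U : Matrix V V ℂ, U ∈ Matrix.unitaryGroup V ℂ ∧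
      ∀ i j, U i j ≠ 0 ↔ G.Adj i j) :
    ∃ M : G.Subgraph, M.IsPerfectMatching := by
  classical
  haveI : DecidableRel G.Adj := Classical.decRel _
  obtain ⟨U, hUu, hUsupp⟩ := hsupp
  obtain ⟨col⟩ := hbip
  -- rows of `U` are linearly independent
  have hUunit : IsUnit U := ⟨Unitary.toUnits ⟨U, hUu⟩, rfl⟩
  have hrows : LinearIndependent ℂ (fun i => U i) :=
    Matrix.linearIndependent_rows_iff_isUnit.2 hUunit
  -- Hall's condition for every finite set of vertices
  have key : ∀ S : Finset V, S.card ≤ (S.biUnion (fun v => G.neighborFinset v)).card := by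
    intro S
    set T : Finset V := S.biUnion (fun v => G.neighborFinset v) with hT
    have hw : LinearIndependent ℂ (fun i : ↥S => fun j : ↥T => U ↑i ↑j) := by
      rw [Fintype.linearIndependent_iff]
      intro cc hcc i
      have hrest := hrows.comp (Subtype.val : ↥S → V) Subtype.val_injective
      rw [Fintype.linearIndependent_iff] at hrest
      refine hrest cc ?_ i
      funext j
      by_cases hj : j ∈ T
      · have := congrFun hcc ⟨j, hj⟩
        simpa using this
      · have hz : ∀ k : ↥S, U ↑k j = 0 := by
          intro k
          by_contra hne
          exact hj (Finset.mem_biUnion.2 ⟨↑k, k.2,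
            (SimpleGraph.mem_neighborFinset _ _ _).2 ((hUsupp _ _).1 hne)⟩)
        simp [hz]
    have hcard := hw.fintype_card_le_finrank
    rw [Module.finrank_fintype_fun_eq_card] at hcard
    simpa [Fintype.card_coe] using hcard
  -- Apply Hall's theorem to each color class
  have one_of_ne : ∀ x : Fin 2, x ≠ 0 → x = 1 := by decide
  have hall : ∀ b : Fin 2, ∃ f : {v : V // col v = b} → V,
      Function.Injective f ∧ ∀ a, G.Adj a.1 (f a) := by
    intro b
    have hcond : ∀ s : Finset {v : V // col v = b},
        s.card ≤ (s.biUnion (fun a => G.neighborFinset ↑a)).card := by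
      intro s
      have h1 : (s.image Subtype.val).biUnion (fun v => G.neighborFinset v)
          = s.biUnion (fun a => G.neighborFinset ↑a) := Finset.image_biUnion
      have h2 : (s.image Subtype.val).card = s.card :=
        Finset.card_image_of_injective _ Subtype.val_injective
      calc s.card = (s.image Subtype.val).card := h2.symm
        _ ≤ ((s.image Subtype.val).biUnion (fun v => G.neighborFinset v)).card := key _
        _ = (s.biUnion (fun a => G.neighborFinset ↑a)).card := by rw [h1]
    obtain ⟨f, hfinj, hf⟩ := (Finset.all_card_le_biUnion_card_iff_exists_injective
      (fun a : {v : V // col v = b} => G.neighborFinset ↑a)).1 hcond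
    exact ⟨f, hfinj, fun a => (SimpleGraph.mem_neighborFinset _ _ _).1 (hf a)⟩
  obtain ⟨f, hfinj, hf⟩ := hall 0
  obtain ⟨g, hginj, hg⟩ := hall 1
  have hfcol : ∀ a : {v : V // col v = 0}, col (f a) = 1 := fun a =>
    one_of_ne _ (fun h0 => (col.valid (hf a)) (a.2.trans h0.symm))
  have hgcol : ∀ b : {v : V // col v = 1}, col (g b) = 0 := by
    intro b
    by_contra h0
    exact (col.valid (hg b)) (b.2.trans (one_of_ne _ h0).symm)
  -- `f` induces a bijection between the color classes
  let f' : {v : V // col v = 0} → {v : V // col v = 1} := fun a => ⟨f a, hfcol a⟩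
  let g' : {v : V // col v = 1} → {v : V // col v = 0} := fun b => ⟨g b, hgcol b⟩
  have hf'inj : Function.Injective f' := fun a b h =>
    hfinj (congrArg Subtype.val h)
  have hg'inj : Function.Injective g' := fun a b h =>
    hginj (congrArg Subtype.val h)
  have hcards : Fintype.card {v : V // col v = 0} = Fintype.card {v : V // col v = 1} :=
    le_antisymm (Fintype.card_le_of_injective _ hf'inj)
      (Fintype.card_le_of_injective _ hg'inj)
  have hf'bij : Function.Bijective f' :=
    (Fintype.bijective_iff_injective_and_card f').2 ⟨hf'inj, hcards⟩
  let e := Equiv.ofBijective f' hf'bij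
  -- the matching involution
  let σ : V → V := fun v =>
    if h : col v = 0 then ↑(e ⟨v, h⟩) else ↑(e.symm ⟨v, one_of_ne _ h⟩)
  have hσ0 : ∀ (v : V) (h : col v = 0), σ v = ↑(e ⟨v, h⟩) := by
    intro v h; simp only [σ, dif_pos h]
  have hσ1 : ∀ (v : V) (h : col v = 1), σ v = ↑(e.symm ⟨v, h⟩) := by
    intro v h
    have hne : ¬ col v = 0 := by rw [h]; decide
    simp only [σ, dif_neg hne]
  have hadj : ∀ v, G.Adj v (σ v) := by
    intro v
    by_cases h : col v = 0
    · rw [hσ0 v h]; exact hf ⟨v, h⟩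
    · have h1 : col v = 1 := one_of_ne _ h
      rw [hσ1 v h1]
      have heq : f' (e.symm ⟨v, h1⟩) = (⟨v, h1⟩ : {v : V // col v = 1}) :=
        e.apply_symm_apply (⟨v, h1⟩ : {v : V // col v = 1})
      have hval : f (e.symm ⟨v, h1⟩) = v := congrArg Subtype.val heq
      have := hf (e.symm ⟨v, h1⟩)
      rw [hval] at this
      exact this.symm
  have hinvol : ∀ v, σ (σ v) = v := by
    intro v
    by_cases h : col v = 0
    · rw [hσ0 v h]
      have h1 : col ((e ⟨v, h⟩ : {v : V // col v = 1}) : V) = 1 := (e ⟨v, h⟩).2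
      rw [hσ1 _ h1]
      have : (⟨↑(e ⟨v, h⟩), h1⟩ : {v : V // col v = 1}) = e ⟨v, h⟩ := Subtype.ext rfl
      rw [this, e.symm_apply_apply]
    · have h1 : col v = 1 := one_of_ne _ h
      rw [hσ1 v h1]
      have h0 : col ((e.symm ⟨v, h1⟩ : {v : V // col v = 0}) : V) = 0 := (e.symm ⟨v, h1⟩).2
      rw [hσ0 _ h0]
      have : (⟨↑(e.symm ⟨v, h1⟩), h0⟩ : {v : V // col v = 0}) = e.symm ⟨v, h1⟩ :=
        Subtype.ext rfl
      rw [this, e.apply_symm_apply]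
  refine ⟨⟨Set.univ, fun x y => σ x = y, ?_, fun {x y} _ => Set.mem_univ x, ?_⟩, ?_, ?_⟩
  · intro x y h
    exact h ▸ hadj x
  · refine ⟨?_⟩
    intro x y h
    rw [← h, hinvol]
  · intro v _
    exact ⟨σ v, rfl, fun y hy => Eq.symm hy⟩
  · intro v
    exact Set.mem_univ v
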